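/- (Cauchy–Kovalevskaia isomorphisms) For every k ≥ 0, the map CK⁰_{x_n} : P_k(ℝ^{n−1}) → ℝ[x_1,…,x_n] given by CK⁰_{x_n}(p) = Σ_{j=0}^{⌊k/2⌋} (−1)^j x_n^{2j} Δ_{[n−1]}^j p / (2^{2j} j! (μ_n+½)^{(j)}) is a linear isomorphism onto H_k^+(ℝ^n), and the map CK¹_{x_n} : P_{k−1}(ℝ^{n−1}) → ℝ[x_1,…,x_n] given by CK¹_{x_n}(p) = Σ_{j=0}^{⌊(k-1)/2⌋} (−1)^j x_n^{2j+1} Δ_{[n−1]}^j p / (2^{2j} j! (μ_n+3/2)^{(j)}) is a linear isomorphism onto H_k^−(ℝ^n). -/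

import Mathlib

open MvPolynomial Finset

noncomputable section

variable {n : ℕ}

/-- Reflection operator `r_i`. -/
def reflOp (i : Fin n) : Module.End ℝ (MvPolynomial (Fin n) ℝ) :=
  (MvPolynomial.aeval (fun j : Fin n => if j = i then -X i else X j)).toLinearMap

/-- Division by the variable `x_i` (as a linear operator, discarding non-divisible terms). -/
def divXop (i : Fin n) : Module.End ℝ (MvPolynomial (Fin n) ℝ) where
  toFun p := p.divMonomial (Finsupp.single i 1)
  map_add' p q := by ext m; simp [coeff_divMonomial]
  map_smul' c p := by ext m; simp [coeff_divMonomial]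

/-- The `i`-th `Z_2^n` Dunkl operator `T_i = ∂_i + μ_i x_i⁻¹ (1 - r_i)`. -/
def dunklT (μ : Fin n → ℝ) (i : Fin n) : Module.End ℝ (MvPolynomial (Fin n) ℝ) :=
  (pderiv i).toLinearMap + μ i • (divXop i * (1 - reflOp i))

/-- The intermediate Laplace–Dunkl operator `Δ_A = Σ_{i∈A} T_i²`. -/
def lapD (μ : Fin n → ℝ) (A : Finset (Fin n)) : Module.End ℝ (MvPolynomial (Fin n) ℝ) :=
  ∑ i ∈ A, dunklT μ i ^ 2

/-- Multiplication by `‖x_A‖² = Σ_{i∈A} x_i²`. -/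
def mulX2 (A : Finset (Fin n)) : Module.End ℝ (MvPolynomial (Fin n) ℝ) :=
  LinearMap.mulLeft ℝ (∑ i ∈ A, X i ^ 2)

/-- The Euler operator `E_A = Σ_{i∈A} x_i ∂_i`. -/
def eulerOp (A : Finset (Fin n)) : Module.End ℝ (MvPolynomial (Fin n) ℝ) :=
  ∑ i ∈ A, LinearMap.mulLeft ℝ (X i) * (pderiv i).toLinearMap

/-- `γ_A = |A|/2 + Σ_{i∈A} μ_i`. -/
def gamA (μ : Fin n → ℝ) (A : Finset (Fin n)) : ℝ :=
  (A.card : ℝ) / 2 + ∑ i ∈ A, μ i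

/-- The Casimir operator `C_A`. -/
def casOp (μ : Fin n → ℝ) (A : Finset (Fin n)) : Module.End ℝ (MvPolynomial (Fin n) ℝ) :=
  (1 / 4 : ℝ) • ((eulerOp A + gamA μ A • 1) ^ 2 - (2 : ℝ) • (eulerOp A + gamA μ A • 1)
    - mulX2 A * lapD μ A)


namespace CKdev

lemma coeff_divXop (i : Fin n) (p : MvPolynomial (Fin n) ℝ) (d : Fin n →₀ ℕ) :
    coeff d (divXop i p) = coeff (d + Finsupp.single i 1) p := by
  show coeff d (p.divMonomial (Finsupp.single i 1)) = _
  rw [coeff_divMonomial, add_comm]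

lemma coeff_pderiv (i : Fin n) (p : MvPolynomial (Fin n) ℝ) (d : Fin n →₀ ℕ) :
    coeff d (pderiv i p) = ((d i : ℝ) + 1) * coeff (d + Finsupp.single i 1) p := by
  induction p using MvPolynomial.induction_on' with
  | add p q hp hq => simp [hp, hq]; ring
  | monomial u a =>
    rw [pderiv_monomial, coeff_monomial, coeff_monomial]
    by_cases h : u = d + Finsupp.single i 1
    · subst h
      rw [if_pos, if_pos rfl]
      · push_cast; simp [Finsupp.single_apply]; ring
      · ext j
        by_cases hj : j = i <;> simp [hj, Finsupp.single_apply]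
    · rw [if_neg h, mul_zero]
      by_cases h2 : u - Finsupp.single i 1 = d
      · have hui : u i = 0 := by
          by_contra hui
          apply h
          ext j
          have h2j := congrArg (fun f => f j) h2
          simp only [Finsupp.coe_tsub, Pi.sub_apply, Finsupp.coe_add, Pi.add_apply] at h2j ⊢
          rw [Finsupp.single_apply] at h2j ⊢
          by_cases hj : i = j
          · subst hj; simp at h2j ⊢; omega
          · simp [hj] at h2j ⊢; omega
        simp [h2, hui]
      · simp [h2]

lemma reflOp_apply (i : Fin n) (p : MvPolynomial (Fin n) ℝ) :
    reflOp i p = MvPolynomial.aeval (fun j : Fin n => if j = i then -X i else X j) p := rfl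

lemma coeff_reflOp (i : Fin n) (p : MvPolynomial (Fin n) ℝ) (d : Fin n →₀ ℕ) :
    coeff d (reflOp i p) = (-1 : ℝ) ^ (d i) * coeff d p := by
  classical
  induction p using MvPolynomial.induction_on generalizing d with
  | C a =>
    rw [reflOp_apply, aeval_C]
    rw [show ((algebraMap ℝ (MvPolynomial (Fin n) ℝ)) a) = C a from rfl, coeff_C]
    split_ifs with h
    · simp [← h]
    · ring
  | add p q hp hq =>
    simp only [map_add, coeff_add, hp, hq]; ring
  | mul_X p j hp =>
    rw [reflOp_apply, map_mul, aeval_X, ← reflOp_apply i]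
    by_cases hj : j = i
    · subst hj
      rw [if_pos rfl, mul_neg, coeff_neg, coeff_mul_X', coeff_mul_X']
      split_ifs with h
      · rw [hp]
        have hd : d j ≠ 0 := by simpa [Finsupp.mem_support_iff] using h
        have h1 : ((d - Finsupp.single j 1 : Fin n →₀ ℕ)) j = d j - 1 := by simp
        rw [h1]
        have hpow : (-1 : ℝ) ^ (d j) = -(-1 : ℝ) ^ (d j - 1) := by
          conv_lhs => rw [show d j = (d j - 1) + 1 from by omega]
          rw [pow_succ]; ring
        rw [hpow]; ring
      · simp
    · rw [if_neg hj, coeff_mul_X', coeff_mul_X']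
      split_ifs with h
      · have h2 : ((d - Finsupp.single j 1 : Fin n →₀ ℕ)) i = d i := by
          simp [Finsupp.single_apply, hj]
        rw [hp, h2]
      · simp


/-- the symbol `c_m = m + a(1-(-1)^m)` -/
def cc (a : ℝ) (m : ℕ) : ℝ := m + a * (1 - (-1 : ℝ) ^ m)

lemma coeff_dunklT (μ : Fin n → ℝ) (i : Fin n) (p : MvPolynomial (Fin n) ℝ) (d : Fin n →₀ ℕ) :
    coeff d (dunklT μ i p) = cc (μ i) (d i + 1) * coeff (d + Finsupp.single i 1) p := by
  have hs : ((d + Finsupp.single i 1 : Fin n →₀ ℕ)) i = d i + 1 := by simp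
  have : dunklT μ i p = pderiv i p + μ i • (divXop i (p - reflOp i p)) := rfl
  rw [this]
  rw [coeff_add, coeff_smul, coeff_pderiv, coeff_divXop, coeff_sub, coeff_reflOp, hs, cc]
  push_cast [smul_eq_mul]
  ring

lemma coeff_dunklT_sq (μ : Fin n → ℝ) (i : Fin n) (p : MvPolynomial (Fin n) ℝ) (d : Fin n →₀ ℕ) :
    coeff d ((dunklT μ i ^ 2) p)
      = cc (μ i) (d i + 1) * cc (μ i) (d i + 2) * coeff (d + Finsupp.single i 2) p := by
  have : (dunklT μ i ^ 2) p = dunklT μ i (dunklT μ i p) := by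
    rw [pow_two]; rfl
  rw [this, coeff_dunklT, coeff_dunklT]
  have hs : ((d + Finsupp.single i 1 : Fin n →₀ ℕ)) i = d i + 1 := by simp
  rw [hs]
  have h2 : d + Finsupp.single i 1 + Finsupp.single i 1 = d + Finsupp.single i 2 := by
    rw [add_assoc, ← Finsupp.single_add]
  rw [h2]
  ring

/-- `p` does not involve the variable `x_e` (coefficient characterization). -/
def Efree (e : Fin n) (p : MvPolynomial (Fin n) ℝ) : Prop :=
  ∀ d : Fin n →₀ ℕ, d e ≠ 0 → coeff d p = 0

/-- homogeneity, coefficient characterization -/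
def Hom (m : ℕ) (p : MvPolynomial (Fin n) ℝ) : Prop :=
  ∀ d : Fin n →₀ ℕ, coeff d p ≠ 0 → ∑ i, d i = m

/-- evaluation of `x_e` at `0` -/
def ev0 (e : Fin n) : MvPolynomial (Fin n) ℝ →ₐ[ℝ] MvPolynomial (Fin n) ℝ :=
  MvPolynomial.aeval (fun j : Fin n => if j = e then 0 else X j)

lemma coeff_ev0 (e : Fin n) (p : MvPolynomial (Fin n) ℝ) (d : Fin n →₀ ℕ) :
    coeff d (ev0 e p) = if d e = 0 then coeff d p else 0 := by
  classical
  induction p using MvPolynomial.induction_on generalizing d with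
  | C a =>
    rw [show ev0 e (C a) = C a by simp [ev0, algebraMap_eq], coeff_C]
    split_ifs with h1 h2 h2
    · rfl
    · exfalso; apply h2; rw [← h1]; rfl
    · rfl
    · rfl
  | add p q hp hq =>
    simp only [map_add, coeff_add, hp, hq]
    split_ifs <;> simp
  | mul_X p j hp =>
    rw [show ev0 e (p * X j) = ev0 e p * (if j = e then 0 else X j) by
      simp [ev0]]
    by_cases hj : j = e
    · subst hj
      rw [if_pos rfl, mul_zero, coeff_zero, coeff_mul_X']
      split_ifs with h1 h2
      · exfalso; simp [Finsupp.mem_support_iff] at h2; omega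
      · rfl
      · rfl
    · rw [if_neg hj, coeff_mul_X', coeff_mul_X']
      split_ifs with h1 h2 h2
      · rw [hp]
        have : ((d - Finsupp.single j 1 : Fin n →₀ ℕ)) e = d e := by
          simp [Finsupp.single_apply, hj]
        rw [this, if_pos h2]
      · rw [hp]
        have : ((d - Finsupp.single j 1 : Fin n →₀ ℕ)) e = d e := by
          simp [Finsupp.single_apply, hj]
        rw [this, if_neg h2]
      · rfl
      · rfl

/-- the `m`-th slice in the variable `x_e`, as a linear operator -/
def sliceL (e : Fin n) (m : ℕ) : Module.End ℝ (MvPolynomial (Fin n) ℝ) :=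
  (ev0 e).toLinearMap ∘ₗ (divXop e ^ m)

lemma coeff_pow_divXop (e : Fin n) (m : ℕ) (p : MvPolynomial (Fin n) ℝ) (d : Fin n →₀ ℕ) :
    coeff d ((divXop e ^ m) p) = coeff (d + Finsupp.single e m) p := by
  induction m generalizing d with
  | zero => simp
  | succ m ih =>
    rw [pow_succ', Module.End.mul_apply, coeff_divXop, ih, add_assoc, ← Finsupp.single_add,
      add_comm 1 m]

lemma coeff_sliceL (e : Fin n) (m : ℕ) (p : MvPolynomial (Fin n) ℝ) (d : Fin n →₀ ℕ) :
    coeff d (sliceL e m p) = if d e = 0 then coeff (d + Finsupp.single e m) p else 0 := by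
  rw [sliceL, LinearMap.comp_apply, AlgHom.toLinearMap_apply, coeff_ev0]
  split_ifs with h
  · rw [coeff_pow_divXop]
  · rfl

lemma sliceL_efree (e : Fin n) (m : ℕ) (p : MvPolynomial (Fin n) ℝ) :
    Efree e (sliceL e m p) := by
  intro d hd
  rw [coeff_sliceL, if_neg hd]

lemma sliceL_reflOp (e : Fin n) (m : ℕ) (p : MvPolynomial (Fin n) ℝ) :
    sliceL e m (reflOp e p) = ((-1 : ℝ) ^ m) • sliceL e m p := by
  ext d
  rw [coeff_smul, coeff_sliceL, coeff_sliceL]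
  by_cases hd : d e = 0
  · rw [if_pos hd, if_pos hd, coeff_reflOp]
    have : ((d + Finsupp.single e m : Fin n →₀ ℕ)) e = m := by simp [hd]
    rw [this, smul_eq_mul]
  · rw [if_neg hd, if_neg hd, smul_zero]

lemma sliceL_dunklT_sq_e (μ : Fin n → ℝ) (e : Fin n) (m : ℕ) (p : MvPolynomial (Fin n) ℝ) :
    sliceL e m ((dunklT μ e ^ 2) p)
      = (cc (μ e) (m + 1) * cc (μ e) (m + 2)) • sliceL e (m + 2) p := by
  ext d
  rw [coeff_smul, coeff_sliceL, coeff_sliceL]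
  by_cases hd : d e = 0
  · rw [if_pos hd, if_pos hd, coeff_dunklT_sq]
    have h1 : ((d + Finsupp.single e m : Fin n →₀ ℕ)) e = m := by simp [hd]
    have h2 : d + Finsupp.single e m + Finsupp.single e 2 = d + Finsupp.single e (m + 2) := by
      rw [add_assoc, ← Finsupp.single_add]
    rw [h1, h2, smul_eq_mul]
  · rw [if_neg hd, if_neg hd, smul_zero]

lemma sliceL_dunklT_sq_ne (μ : Fin n → ℝ) (e i : Fin n) (hi : i ≠ e) (m : ℕ)
    (p : MvPolynomial (Fin n) ℝ) :
    sliceL e m ((dunklT μ i ^ 2) p) = (dunklT μ i ^ 2) (sliceL e m p) := by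
  ext d
  rw [coeff_sliceL, coeff_dunklT_sq]
  by_cases hd : d e = 0
  · rw [if_pos hd, coeff_dunklT_sq, coeff_sliceL]
    have h1 : ((d + Finsupp.single e m : Fin n →₀ ℕ)) i = d i := by
      simp [Finsupp.single_apply, Ne.symm hi]
    have h2 : ((d + Finsupp.single i 2 : Fin n →₀ ℕ)) e = d e := by
      simp [Finsupp.single_apply, hi]
    rw [h1, h2, if_pos hd]
    have h3 : d + Finsupp.single e m + Finsupp.single i 2
        = d + Finsupp.single i 2 + Finsupp.single e m := by
      rw [add_assoc, add_assoc, add_comm (Finsupp.single e m)]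
    rw [h3]
  · rw [if_neg hd, coeff_dunklT_sq, coeff_sliceL]
    have h2 : ((d + Finsupp.single i 2 : Fin n →₀ ℕ)) e = d e := by
      simp [Finsupp.single_apply, hi]
    rw [h2, if_neg hd, mul_zero]

lemma eq_of_sliceL (e : Fin n) (p q : MvPolynomial (Fin n) ℝ)
    (h : ∀ m, sliceL e m p = sliceL e m q) : p = q := by
  ext d
  have key : ∀ r : MvPolynomial (Fin n) ℝ,
      coeff (Finsupp.erase e d) (sliceL e (d e) r) = coeff d r := by
    intro r
    rw [coeff_sliceL, if_pos (Finsupp.erase_same)]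
    congr 1
    rw [add_comm]
    exact Finsupp.single_add_erase e d
  rw [← key p, ← key q, h]


lemma sum_add_single (d : Fin n →₀ ℕ) (i : Fin n) (c : ℕ) :
    ∑ j, ((d + Finsupp.single i c : Fin n →₀ ℕ)) j = (∑ j, d j) + c := by
  simp only [Finsupp.coe_add, Pi.add_apply]
  rw [Finset.sum_add_distrib]
  congr 1
  simp [Finsupp.single_apply, Finset.sum_ite_eq]

lemma efree_dunklT_sq {e : Fin n} (μ : Fin n → ℝ) {i : Fin n} (hi : i ≠ e)
    {p : MvPolynomial (Fin n) ℝ} (hp : Efree e p) : Efree e ((dunklT μ i ^ 2) p) := by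
  intro d hd
  rw [coeff_dunklT_sq]
  have : ((d + Finsupp.single i 2 : Fin n →₀ ℕ)) e = d e := by
    simp [Finsupp.single_apply, hi]
  rw [hp _ (by rw [this]; exact hd), mul_zero]

lemma efree_lapD {e : Fin n} (μ : Fin n → ℝ) {B : Finset (Fin n)} (hB : e ∉ B)
    {p : MvPolynomial (Fin n) ℝ} (hp : Efree e p) : Efree e (lapD μ B p) := by
  intro d hd
  rw [lapD, LinearMap.sum_apply, coeff_sum]
  apply Finset.sum_eq_zero
  intro i hi
  exact efree_dunklT_sq μ (fun h => hB (by rw [← h]; exact hi)) hp d hd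

lemma efree_smul {e : Fin n} (c : ℝ) {p : MvPolynomial (Fin n) ℝ} (hp : Efree e p) :
    Efree e (c • p) := by
  intro d hd; rw [coeff_smul, hp d hd, smul_zero]

lemma efree_zero (e : Fin n) : Efree e (0 : MvPolynomial (Fin n) ℝ) := by
  intro d _; rw [coeff_zero]

lemma hom_smul {m : ℕ} (c : ℝ) {p : MvPolynomial (Fin n) ℝ} (hp : Hom m p) :
    Hom m (c • p) := by
  intro d hd
  rw [coeff_smul, smul_eq_mul] at hd
  exact hp d (fun h => hd (by rw [h, mul_zero]))

lemma hom_sum {m : ℕ} {ι : Type*} (s : Finset ι) (f : ι → MvPolynomial (Fin n) ℝ)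
    (hf : ∀ i ∈ s, Hom m (f i)) : Hom m (∑ i ∈ s, f i) := by
  intro d hd
  rw [coeff_sum] at hd
  obtain ⟨i, hi, hne⟩ := Finset.exists_ne_zero_of_sum_ne_zero hd
  exact hf i hi d hne

lemma hom_dunklT_sq {m : ℕ} (μ : Fin n → ℝ) (i : Fin n)
    {p : MvPolynomial (Fin n) ℝ} (hp : Hom (m + 2) p) : Hom m ((dunklT μ i ^ 2) p) := by
  intro d hd
  rw [coeff_dunklT_sq] at hd
  have h2 : coeff (d + Finsupp.single i 2) p ≠ 0 := fun h => hd (by rw [h, mul_zero])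
  have := hp _ h2
  rw [sum_add_single] at this
  omega

lemma hom_lapD {m : ℕ} (μ : Fin n → ℝ) (B : Finset (Fin n))
    {p : MvPolynomial (Fin n) ℝ} (hp : Hom (m + 2) p) : Hom m (lapD μ B p) := by
  rw [lapD, LinearMap.sum_apply]
  exact hom_sum _ _ (fun i _ => hom_dunklT_sq μ i hp)

lemma lapD_eq_zero_low {m : ℕ} (μ : Fin n → ℝ) (B : Finset (Fin n))
    {p : MvPolynomial (Fin n) ℝ} (hp : Hom m p) (hm : m ≤ 1) : lapD μ B p = 0 := by
  rw [lapD, LinearMap.sum_apply]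
  apply Finset.sum_eq_zero
  intro i _
  ext d
  rw [coeff_dunklT_sq, coeff_zero]
  have hz : coeff (d + Finsupp.single i 2) p = 0 := by
    by_contra hne
    have := hp _ hne
    rw [sum_add_single] at this
    omega
  rw [hz, mul_zero]

lemma hom_zero (m : ℕ) : Hom m (0 : MvPolynomial (Fin n) ℝ) := by
  intro d hd; rw [coeff_zero] at hd; exact absurd rfl hd

lemma hom_X_pow_mul {e : Fin n} {t : ℕ} (s : ℕ) {r : MvPolynomial (Fin n) ℝ}
    (hr : Hom t r) : Hom (s + t) (X e ^ s * r) := by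
  intro d hd
  rw [X_pow_eq_monomial, coeff_monomial_mul'] at hd
  by_cases hle : Finsupp.single e s ≤ d
  · rw [if_pos hle, one_mul] at hd
    have h2 := hr _ hd
    have hd2 : d = (d - Finsupp.single e s) + Finsupp.single e s :=
      (tsub_add_cancel_of_le hle).symm
    rw [hd2, sum_add_single, h2]
    omega
  · rw [if_neg hle] at hd; exact absurd rfl hd

/-- the Cauchy–Kovalevskaia operator in generic form -/
def CKop (e : Fin n) (D : Module.End ℝ (MvPolynomial (Fin n) ℝ)) (A : ℕ → ℝ) (ε K : ℕ) :
    Module.End ℝ (MvPolynomial (Fin n) ℝ) :=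
  ∑ j ∈ Finset.range (K + 1), A j • (LinearMap.mulLeft ℝ (X e ^ (2 * j + ε)) * D ^ j)

lemma CKop_apply (e : Fin n) (D : Module.End ℝ (MvPolynomial (Fin n) ℝ)) (A : ℕ → ℝ)
    (ε K : ℕ) (q : MvPolynomial (Fin n) ℝ) :
    CKop e D A ε K q = ∑ j ∈ Finset.range (K + 1), A j • (X e ^ (2 * j + ε) * ((D ^ j) q)) := by
  rw [CKop, LinearMap.sum_apply]
  apply Finset.sum_congr rfl
  intro j _
  rw [LinearMap.smul_apply, Module.End.mul_apply, LinearMap.mulLeft_apply]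

lemma sliceL_X_pow_mul (e : Fin n) (s m : ℕ) {q : MvPolynomial (Fin n) ℝ} (hq : Efree e q) :
    sliceL e m (X e ^ s * q) = if s = m then q else 0 := by
  ext d
  rw [coeff_sliceL]
  by_cases hd : d e = 0
  · rw [if_pos hd, X_pow_eq_monomial, coeff_monomial_mul']
    by_cases hle : Finsupp.single e s ≤ d + Finsupp.single e m
    · have hsm : s ≤ m := by
        have := hle e
        simpa [Finsupp.single_apply, hd] using this
      rw [if_pos hle, one_mul]
      have hkey : d + Finsupp.single e m - Finsupp.single e s
          = d + Finsupp.single e (m - s) := by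
        ext j
        simp only [Finsupp.coe_tsub, Finsupp.coe_add, Pi.sub_apply, Pi.add_apply]
        rw [Finsupp.single_apply, Finsupp.single_apply, Finsupp.single_apply]
        split_ifs with hj
        · subst hj; omega
        · omega
      rw [hkey]
      by_cases hsm2 : s = m
      · subst hsm2
        rw [if_pos rfl]
        simp
      · rw [if_neg hsm2]
        rw [hq _ (by simp [hd]; omega), coeff_zero]
    · have hsm : ¬ (s ≤ m) := by
        intro hsm
        apply hle
        intro j
        rw [Finsupp.single_apply]
        split_ifs with hj
        · subst hj; simp [Finsupp.single_apply, hd]; omega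
        · omega
      rw [if_neg hle, if_neg (by omega : ¬ s = m), coeff_zero]
  · rw [if_neg hd]
    split_ifs with hsm
    · rw [hq d hd]
    · rw [coeff_zero]

lemma efree_pow_lapD {e : Fin n} (μ : Fin n → ℝ) {q : MvPolynomial (Fin n) ℝ}
    (hq : Efree e q) (j : ℕ) :
    Efree e (((lapD μ (Finset.univ.erase e)) ^ j) q) := by
  induction j generalizing q with
  | zero => simpa using hq
  | succ j ih =>
    rw [pow_succ, Module.End.mul_apply]
    exact ih (efree_lapD μ (Finset.notMem_erase e _) hq)

lemma sliceL_CKop_hit (e : Fin n) (μ : Fin n → ℝ) (A : ℕ → ℝ) (ε K : ℕ)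
    {q : MvPolynomial (Fin n) ℝ} (hq : Efree e q) {j : ℕ} (hj : j ≤ K) :
    sliceL e (2 * j + ε) (CKop e (lapD μ (Finset.univ.erase e)) A ε K q)
      = A j • ((lapD μ (Finset.univ.erase e)) ^ j) q := by
  rw [CKop_apply, map_sum]
  have hterm : ∀ j' ∈ Finset.range (K + 1),
      sliceL e (2 * j + ε) (A j' • (X e ^ (2 * j' + ε) * ((lapD μ (Finset.univ.erase e) ^ j') q)))
        = if 2 * j' + ε = 2 * j + ε
          then A j' • ((lapD μ (Finset.univ.erase e)) ^ j') q else 0 := by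
    intro j' _
    rw [map_smul, sliceL_X_pow_mul e _ _ (efree_pow_lapD μ hq j')]
    split_ifs with h
    · rfl
    · rw [smul_zero]
  rw [Finset.sum_congr rfl hterm]
  rw [Finset.sum_eq_single j]
  · rw [if_pos rfl]
  · intro j' _ hne
    rw [if_neg (by omega)]
  · intro hmem
    exact absurd (Finset.mem_range.mpr (by omega)) hmem

lemma sliceL_CKop_miss (e : Fin n) (μ : Fin n → ℝ) (A : ℕ → ℝ) (ε K : ℕ)
    {q : MvPolynomial (Fin n) ℝ} (hq : Efree e q) {m : ℕ}
    (hm : ∀ j, j ≤ K → 2 * j + ε ≠ m) :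
    sliceL e m (CKop e (lapD μ (Finset.univ.erase e)) A ε K q) = 0 := by
  rw [CKop_apply, map_sum]
  apply Finset.sum_eq_zero
  intro j hjm
  rw [map_smul, sliceL_X_pow_mul e _ _ (efree_pow_lapD μ hq j)]
  rw [if_neg (hm j (by simpa using Nat.lt_succ_iff.mp (Finset.mem_range.mp hjm)))]
  rw [smul_zero]


lemma pow_lapD_hom (μ : Fin n → ℝ) (B : Finset (Fin n)) {k : ℕ} {q : MvPolynomial (Fin n) ℝ}
    (hq : Hom k q) (j : ℕ) :
    (2*j ≤ k → Hom (k - 2*j) (((lapD μ B) ^ j) q)) ∧ (2*j > k → ((lapD μ B) ^ j) q = 0) := by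
  induction j with
  | zero =>
    refine ⟨fun _ => by simpa using hq, fun h => by omega⟩
  | succ j ih =>
    have hstep : ((lapD μ B) ^ (j+1)) q = lapD μ B (((lapD μ B)^j) q) := by
      rw [pow_succ']; rfl
    constructor
    · intro h
      rw [hstep]
      have h1 := ih.1 (by omega)
      rw [show k - 2*j = (k - 2*(j+1)) + 2 from by omega] at h1
      exact hom_lapD μ B h1
    · intro h
      rw [hstep]
      by_cases h2 : 2*j > k
      · rw [ih.2 h2, map_zero]
      · exact lapD_eq_zero_low μ B (ih.1 (by omega)) (by omega)

/-- coefficients of the CK operator -/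
def Acoef (ν : ℝ) (j : ℕ) : ℝ :=
  (-1 : ℝ) ^ j / (2 ^ (2 * j) * (j.factorial : ℝ) * (ascPochhammer ℝ j).eval ν)

lemma Acoef_zero (ν : ℝ) : Acoef ν 0 = 1 := by simp [Acoef]

lemma Acoef_rec {ν : ℝ} (hν : 0 < ν) (j : ℕ) :
    Acoef ν j + (4*((j:ℝ)+1)*((j:ℝ)+ν)) * Acoef ν (j+1) = 0 := by
  have hp : (ascPochhammer ℝ j).eval ν ≠ 0 := (ascPochhammer_pos j ν hν).ne'
  have hf : ((j.factorial : ℝ)) ≠ 0 := Nat.cast_ne_zero.mpr (Nat.factorial_ne_zero j)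
  have hν' : ν + (j:ℝ) ≠ 0 := by positivity
  have h2 : (2:ℝ)^(2*(j+1)) = 2^(2*j) * 4 := by
    rw [show 2*(j+1) = 2*j + 2 from by ring, pow_add]; norm_num
  have hm1 : (-1:ℝ)^(j+1) = -(-1:ℝ)^j := by rw [pow_succ]; ring
  rw [Acoef, Acoef, ascPochhammer_succ_eval, Nat.factorial_succ, Nat.cast_mul, h2, hm1]
  have h2j : (2:ℝ)^(2*j) ≠ 0 := by positivity
  field_simp
  push_cast; ring

lemma cc_prod {μe : ℝ} {ε : ℕ} (hε : ε ≤ 1) (j : ℕ) :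
    cc μe (2*j+ε+1) * cc μe (2*j+ε+2) = 4*((j:ℝ)+1)*((j:ℝ)+(μe + 1/2 + ε)) := by
  interval_cases ε <;>
  · simp only [cc, pow_add, pow_mul, neg_one_sq, one_pow, one_mul, pow_zero, pow_one]
    push_cast
    ring

lemma sliceL_lapD_univ (μ : Fin n → ℝ) (e : Fin n) (m : ℕ) (p : MvPolynomial (Fin n) ℝ) :
    sliceL e m (lapD μ Finset.univ p)
      = lapD μ (Finset.univ.erase e) (sliceL e m p)
        + (cc (μ e) (m+1) * cc (μ e) (m+2)) • sliceL e (m+2) p := by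
  have hsplit : lapD μ Finset.univ = dunklT μ e ^ 2 + lapD μ (Finset.univ.erase e) := by
    rw [lapD, lapD, ← Finset.add_sum_erase _ _ (Finset.mem_univ e)]
  rw [hsplit, LinearMap.add_apply, map_add, sliceL_dunklT_sq_e]
  have hsum : sliceL e m (lapD μ (Finset.univ.erase e) p)
      = lapD μ (Finset.univ.erase e) (sliceL e m p) := by
    rw [lapD, LinearMap.sum_apply, map_sum, LinearMap.sum_apply]
    apply Finset.sum_congr rfl
    intro i hi
    exact sliceL_dunklT_sq_ne μ e i (Finset.ne_of_mem_erase hi) m p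
  rw [hsum, add_comm]

section Core

variable (μ : Fin n → ℝ) (e : Fin n) (ε k : ℕ) (ν : ℝ)

theorem CK_harmonic (hε : ε ≤ 1) (hν : 0 < ν)
    (hcc : ∀ m : ℕ, cc (μ e) (2*m+ε+1) * cc (μ e) (2*m+ε+2) = 4*((m:ℝ)+1)*((m:ℝ)+ν))
    {q : MvPolynomial (Fin n) ℝ} (hq : Efree e q) (hqh : Hom k q) :
    lapD μ Finset.univ (CKop e (lapD μ (Finset.univ.erase e)) (Acoef ν) ε (k/2) q) = 0 := by
  set D := lapD μ (Finset.univ.erase e) with hD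
  set K := k / 2 with hK
  apply eq_of_sliceL e
  intro m
  rw [map_zero, sliceL_lapD_univ]
  by_cases hm : ∃ j, j ≤ K ∧ 2*j + ε = m
  · obtain ⟨j, hj, rfl⟩ := hm
    rw [sliceL_CKop_hit e μ _ ε K hq hj]
    by_cases hjK : j < K
    · rw [hcc j, show 2*j+ε+2 = 2*(j+1)+ε from by omega,
        sliceL_CKop_hit e μ _ ε K hq (by omega), map_smul]
      have h3 : D (((D)^j) q) = ((D)^(j+1)) q := by rw [pow_succ']; rfl
      rw [h3, smul_smul, ← add_smul, Acoef_rec hν j, zero_smul]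
    · have hjK' : j = K := by omega
      subst hjK'
      rw [sliceL_CKop_miss e μ _ ε K hq (by intro j' h; omega), smul_zero, add_zero, map_smul]
      have h3 : D (((D)^K) q) = ((D)^(K+1)) q := by rw [pow_succ']; rfl
      rw [h3, (pow_lapD_hom μ _ hqh (K+1)).2 (by omega), smul_zero]
  · push_neg at hm
    rw [sliceL_CKop_miss e μ _ ε K hq hm, map_zero, zero_add]
    have hm2 : ∀ j, j ≤ K → 2*j+ε ≠ m+2 := by
      intro j hj heq
      rcases Nat.eq_zero_or_pos j with h0 | h0
      · omega
      · exact hm (j-1) (by omega) (by omega)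
    rw [sliceL_CKop_miss e μ _ ε K hq hm2, smul_zero]

theorem CK_hom {q : MvPolynomial (Fin n) ℝ} (hq : Efree e q) (hqh : Hom k q) (A : ℕ → ℝ) :
    Hom (k+ε) (CKop e (lapD μ (Finset.univ.erase e)) A ε (k/2) q) := by
  rw [CKop_apply]
  apply hom_sum
  intro j hj
  have hjk : 2*j ≤ k := by
    have := Finset.mem_range.mp hj; omega
  apply hom_smul
  have h1 := (pow_lapD_hom μ (Finset.univ.erase e) hqh j).1 hjk
  have h2 := hom_X_pow_mul (e := e) (2*j+ε) h1
  rwa [show 2*j+ε + (k - 2*j) = k + ε from by omega] at h2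

theorem CK_slice_eps {q : MvPolynomial (Fin n) ℝ} (hq : Efree e q) :
    sliceL e ε (CKop e (lapD μ (Finset.univ.erase e)) (Acoef ν) ε (k/2) q) = q := by
  have h := sliceL_CKop_hit e μ (Acoef ν) ε (k/2) hq (j := 0) (by omega)
  rw [show 2*0+ε = ε from by omega] at h
  rw [h, Acoef_zero, pow_zero, one_smul, Module.End.one_apply]

theorem CK_refl {q : MvPolynomial (Fin n) ℝ} (hq : Efree e q) (A : ℕ → ℝ) :
    reflOp e (CKop e (lapD μ (Finset.univ.erase e)) A ε (k/2) q)
      = ((-1:ℝ)^ε) • CKop e (lapD μ (Finset.univ.erase e)) A ε (k/2) q := by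
  apply eq_of_sliceL e
  intro m
  rw [sliceL_reflOp, map_smul]
  by_cases hm : ∃ j, j ≤ k/2 ∧ 2*j + ε = m
  · obtain ⟨j, hj, rfl⟩ := hm
    congr 1
    rw [pow_add, pow_mul, neg_one_sq, one_pow, one_mul]
  · push_neg at hm
    rw [sliceL_CKop_miss e μ _ ε (k/2) hq hm, smul_zero, smul_zero]


lemma hom_sliceL {e : Fin n} {t m : ℕ} {h : MvPolynomial (Fin n) ℝ} (hh : Hom t h) :
    Hom (t - m) (sliceL e m h) := by
  intro d hd
  rw [coeff_sliceL] at hd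
  by_cases h0 : d e = 0
  · rw [if_pos h0] at hd
    have := hh _ hd
    rw [sum_add_single] at this
    omega
  · rw [if_neg h0] at hd; exact absurd rfl hd

lemma sliceL_zero_high {e : Fin n} {t m : ℕ} {h : MvPolynomial (Fin n) ℝ} (hh : Hom t h)
    (hm : m > t) : sliceL e m h = 0 := by
  ext d
  rw [coeff_sliceL, coeff_zero]
  by_cases h0 : d e = 0
  · rw [if_pos h0]
    by_contra hne
    have := hh _ hne
    rw [sum_add_single] at this
    omega
  · rw [if_neg h0]

lemma sliceL_zero_parity {e : Fin n} {m : ℕ} {c : ℝ} {h : MvPolynomial (Fin n) ℝ}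
    (hsym : reflOp e h = c • h) (hc : (-1:ℝ)^m ≠ c) : sliceL e m h = 0 := by
  have h1 := congrArg (sliceL e m) hsym
  rw [sliceL_reflOp, map_smul] at h1
  have h2 : ((-1:ℝ)^m - c) • sliceL e m h = 0 := by
    rw [sub_smul, h1, sub_self]
  by_cases hzero : (-1:ℝ)^m - c = 0
  · exact absurd (sub_eq_zero.mp hzero) hc
  · have h3 := congrArg (fun z => ((-1:ℝ)^m - c)⁻¹ • z) h2
    simpa [smul_smul, inv_mul_cancel₀ hzero] using h3

lemma neg_one_pow_ne {m ε : ℕ} (hpar : m % 2 ≠ ε % 2) : ((-1:ℝ))^m ≠ (-1:ℝ)^ε := by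
  rcases Nat.even_or_odd m with hm | hm
  · rcases Nat.even_or_odd ε with he | he
    · exfalso; apply hpar; rw [Nat.even_iff] at hm he; omega
    · rw [hm.neg_one_pow, he.neg_one_pow]; norm_num
  · rcases Nat.even_or_odd ε with he | he
    · rw [hm.neg_one_pow, he.neg_one_pow]; norm_num
    · exfalso; apply hpar; rw [Nat.odd_iff] at hm he; omega

theorem CK_surj_core (hε : ε ≤ 1) (hν : 0 < ν)
    (hcc : ∀ m : ℕ, cc (μ e) (2*m+ε+1) * cc (μ e) (2*m+ε+2) = 4*((m:ℝ)+1)*((m:ℝ)+ν))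
    {h : MvPolynomial (Fin n) ℝ} (hh : Hom (k+ε) h)
    (hharm : lapD μ Finset.univ h = 0)
    (hsym : reflOp e h = ((-1:ℝ)^ε) • h) :
    CKop e (lapD μ (Finset.univ.erase e)) (Acoef ν) ε (k/2) (sliceL e ε h) = h := by
  set D := lapD μ (Finset.univ.erase e) with hD
  set K := k / 2 with hK
  set q : MvPolynomial (Fin n) ℝ := sliceL e ε h with hqdef
  have hq : Efree e q := sliceL_efree e ε h
  -- the recursion coming from harmonicity
  have hrec : ∀ m : ℕ, D (sliceL e m h)
      + (cc (μ e) (m+1) * cc (μ e) (m+2)) • sliceL e (m+2) h = 0 := by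
    intro m
    have h1 := congrArg (sliceL e m) hharm
    rwa [sliceL_lapD_univ, map_zero] at h1
  -- the slices of `h` are determined by `q`
  have hclaim : ∀ j : ℕ, sliceL e (2*j+ε) h = Acoef ν j • ((D^j) q) := by
    intro j
    induction j with
    | zero =>
      rw [show 2*0+ε = ε from by omega, Acoef_zero, pow_zero, one_smul, Module.End.one_apply]
    | succ j ih =>
      have h1 := hrec (2*j+ε)
      rw [hcc j, ih, map_smul] at h1
      have hγ : (4*((j:ℝ)+1)*((j:ℝ)+ν)) ≠ 0 := by positivity
      have hDj : D (((D)^j) q) = ((D)^(j+1)) q := by rw [pow_succ']; rfl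
      rw [hDj] at h1
      have hA := Acoef_rec hν j
      have hval : Acoef ν (j+1) = -(Acoef ν j) / (4*((j:ℝ)+1)*((j:ℝ)+ν)) := by
        field_simp at hA ⊢
        linarith
      rw [show 2*(j+1)+ε = 2*j+ε+2 from by omega]
      have h2 : (4*((j:ℝ)+1)*((j:ℝ)+ν)) • sliceL e (2*j+ε+2) h
          = -(Acoef ν j) • ((D)^(j+1)) q := by
        have := congrArg (fun z => z - Acoef ν j • ((D)^(j+1)) q) h1
        simp only [add_sub_cancel_left, zero_sub] at this
        rw [this, neg_smul]
      have h3 := congrArg (fun z => (4*((j:ℝ)+1)*((j:ℝ)+ν))⁻¹ • z) h2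
      simp only [smul_smul, inv_mul_cancel₀ hγ, one_smul] at h3
      rw [h3, hval, div_eq_mul_inv, mul_comm]
  apply eq_of_sliceL e
  intro m
  by_cases hm : ∃ j, j ≤ K ∧ 2*j + ε = m
  · obtain ⟨j, hj, rfl⟩ := hm
    rw [sliceL_CKop_hit e μ _ ε K hq hj, hclaim j]
  · push_neg at hm
    rw [sliceL_CKop_miss e μ _ ε K hq hm]
    by_cases hpar : m % 2 = ε % 2
    · obtain ⟨j₀, rfl⟩ : ∃ j₀, m = 2*j₀+ε := ⟨(m-ε)/2, by omega⟩
      have hj₀ : j₀ > K := by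
        by_contra hcon
        exact hm j₀ (by omega) rfl
      exact (sliceL_zero_high hh (by omega)).symm
    · exact (sliceL_zero_parity hsym (neg_one_pow_ne hpar)).symm

end Core


lemma hom_add {m : ℕ} {p q : MvPolynomial (Fin n) ℝ} (hp : Hom m p) (hq : Hom m q) :
    Hom m (p + q) := by
  intro d hd
  rw [coeff_add] at hd
  by_cases h1 : coeff d p = 0
  · exact hq d (by intro h2; rw [h1, h2, add_zero] at hd; exact hd rfl)
  · exact hp d h1

lemma hom_iff (p : MvPolynomial (Fin n) ℝ) (m : ℕ) : p.IsHomogeneous m ↔ Hom m p := by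
  have hw : ∀ d : Fin n →₀ ℕ, (Finsupp.weight (1 : Fin n → ℕ)) d = ∑ i, d i := by
    intro d
    rw [Finsupp.weight_apply, Finsupp.sum_fintype]
    · simp
    · intro i; simp
  constructor
  · intro hp d hd
    have := hp hd
    rw [← hw d]; exact this
  · intro hp d hd
    rw [hw d]; exact hp d hd

lemma efree_iff (e : Fin n) (p : MvPolynomial (Fin n) ℝ) :
    p ∈ MvPolynomial.supported ℝ {i : Fin n | i ≠ e} ↔ Efree e p := by
  rw [mem_supported]
  constructor
  · intro hs d hd
    by_contra hne
    have hdsup : d ∈ p.support := mem_support_iff.mpr hne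
    have hev : e ∈ d.support := Finsupp.mem_support_iff.mpr hd
    have hmem : e ∈ (↑p.vars : Set (Fin n)) := Finset.mem_coe.mpr ((mem_vars e).mpr ⟨d, hdsup, hev⟩)
    exact (hs hmem) rfl
  · intro hp i hi
    rw [Finset.mem_coe, mem_vars] at hi
    obtain ⟨d, hd, hid⟩ := hi
    show i ≠ e
    rintro rfl
    exact (mem_support_iff.mp hd) (hp d (Finsupp.mem_support_iff.mp hid))

lemma reflOp_invol (e : Fin n) (p : MvPolynomial (Fin n) ℝ) :
    reflOp e (reflOp e p) = p := by
  ext d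
  rw [coeff_reflOp, coeff_reflOp, ← mul_assoc, ← pow_add,
    Even.neg_one_pow ⟨d e, rfl⟩, one_mul]

lemma reflOp_lapD (μ : Fin n → ℝ) (B : Finset (Fin n)) (e : Fin n)
    (p : MvPolynomial (Fin n) ℝ) :
    lapD μ B (reflOp e p) = reflOp e (lapD μ B p) := by
  rw [lapD, LinearMap.sum_apply, LinearMap.sum_apply, map_sum]
  apply Finset.sum_congr rfl
  intro i _
  ext d
  rw [coeff_dunklT_sq, coeff_reflOp, coeff_reflOp, coeff_dunklT_sq]
  have hpar : (-1:ℝ)^(((d + Finsupp.single i 2 : Fin n →₀ ℕ)) e) = (-1:ℝ)^(d e) := by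
    by_cases hie : i = e
    · subst hie
      rw [show ((d + Finsupp.single i 2 : Fin n →₀ ℕ)) i = d i + 2 from by simp, pow_add]
      norm_num
    · rw [show ((d + Finsupp.single i 2 : Fin n →₀ ℕ)) e = d e from by
        simp [Finsupp.single_apply, hie]]
  rw [hpar]; ring

lemma hom_reflOp {e : Fin n} {m : ℕ} {p : MvPolynomial (Fin n) ℝ} (hp : Hom m p) :
    Hom m (reflOp e p) := by
  intro d hd
  rw [coeff_reflOp] at hd
  exact hp d (fun h => hd (by rw [h, mul_zero]))


theorem CK_bijOn (μ : Fin n → ℝ) (e : Fin n) (ε k : ℕ) (ν : ℝ) (hε : ε ≤ 1) (hν : 0 < ν)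
    (hcc : ∀ m : ℕ, cc (μ e) (2*m+ε+1) * cc (μ e) (2*m+ε+2) = 4*((m:ℝ)+1)*((m:ℝ)+ν))
    (Qp : Module.End ℝ (MvPolynomial (Fin n) ℝ))
    (hQ : ∀ y, Qp y = (1/2:ℝ) • (y + ((-1:ℝ)^ε) • reflOp e y)) :
    Set.BijOn (CKop e (lapD μ (Finset.univ.erase e)) (Acoef ν) ε (k/2))
      ((homogeneousSubmodule (Fin n) ℝ k ⊓
          Subalgebra.toSubmodule (MvPolynomial.supported ℝ {i : Fin n | i ≠ e}) :
          Submodule ℝ (MvPolynomial (Fin n) ℝ)) : Set (MvPolynomial (Fin n) ℝ))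
      ((Submodule.map Qp
          (homogeneousSubmodule (Fin n) ℝ (k+ε) ⊓ LinearMap.ker (lapD μ Finset.univ)) :
          Submodule ℝ (MvPolynomial (Fin n) ℝ)) : Set (MvPolynomial (Fin n) ℝ)) := by
  have hPmem : ∀ p : MvPolynomial (Fin n) ℝ,
      p ∈ (homogeneousSubmodule (Fin n) ℝ k ⊓
        Subalgebra.toSubmodule (MvPolynomial.supported ℝ {i : Fin n | i ≠ e})) ↔
      Hom k p ∧ Efree e p := by
    intro p
    rw [Submodule.mem_inf, mem_homogeneousSubmodule, hom_iff, Subalgebra.mem_toSubmodule,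
      efree_iff]
  have hHmem : ∀ p : MvPolynomial (Fin n) ℝ,
      p ∈ (homogeneousSubmodule (Fin n) ℝ (k+ε) ⊓ LinearMap.ker (lapD μ Finset.univ)) ↔
      Hom (k+ε) p ∧ lapD μ Finset.univ p = 0 := by
    intro p
    rw [Submodule.mem_inf, mem_homogeneousSubmodule, hom_iff, LinearMap.mem_ker]
  have key : (-1:ℝ)^ε * (-1:ℝ)^ε = 1 := by
    rw [← pow_add]; exact Even.neg_one_pow ⟨ε, rfl⟩
  have hQfix : ∀ y, reflOp e y = ((-1:ℝ)^ε) • y → Qp y = y := by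
    intro y hy
    rw [hQ, hy, smul_smul, key, one_smul, ← two_smul ℝ y, smul_smul]
    norm_num
  refine ⟨?_, ?_, ?_⟩
  · -- MapsTo
    intro p hp
    rw [SetLike.mem_coe, hPmem] at hp
    obtain ⟨hph, hpe⟩ := hp
    rw [SetLike.mem_coe]
    have hhom := CK_hom μ e ε k hpe hph (Acoef ν)
    have hharm := CK_harmonic μ e ε k ν hε hν hcc hpe hph
    have hrefl := CK_refl μ e ε k hpe (Acoef ν)
    exact Submodule.mem_map.mpr ⟨_, (hHmem _).mpr ⟨hhom, hharm⟩, hQfix _ hrefl⟩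
  · -- InjOn
    intro p hp p' hp' heq
    rw [SetLike.mem_coe, hPmem] at hp hp'
    have h1 := CK_slice_eps μ e ε k ν hp.2
    have h2 := CK_slice_eps μ e ε k ν hp'.2
    rw [← h1, ← h2, heq]
  · -- SurjOn
    intro y hy
    rw [SetLike.mem_coe, Submodule.mem_map] at hy
    obtain ⟨h, hH, rfl⟩ := hy
    rw [hHmem] at hH
    obtain ⟨hhom, hharm⟩ := hH
    have hyval : Qp h = (1/2:ℝ) • (h + ((-1:ℝ)^ε) • reflOp e h) := hQ h
    have hsym : reflOp e (Qp h) = ((-1:ℝ)^ε) • Qp h := by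
      rw [hyval, map_smul, map_add, map_smul, reflOp_invol]
      have key2 : (-1:ℝ)^(ε*2) = 1 := by rw [mul_comm, pow_mul]; norm_num
      match_scalars <;> linarith [key2]

    have hyhom : Hom (k+ε) (Qp h) := by
      rw [hyval]
      exact hom_smul _ (hom_add hhom (hom_smul _ (hom_reflOp hhom)))
    have hyharm : lapD μ Finset.univ (Qp h) = 0 := by
      rw [hyval, map_smul, map_add, map_smul, reflOp_lapD, hharm, map_zero, smul_zero,
        add_zero, smul_zero]
    refine ⟨sliceL e ε (Qp h), ?_, ?_⟩
    · rw [SetLike.mem_coe, hPmem]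
      refine ⟨?_, sliceL_efree e ε _⟩
      have h1 := hom_sliceL (e := e) (m := ε) hyhom
      rwa [show k+ε-ε = k from by omega] at h1
    · exact CK_surj_core μ e ε k ν hε hν hcc hyhom hyharm hsym

end CKdev

end


/-- Cauchy–Kovalevskaia isomorphisms: `CK⁰_{x_n}` restricts to a bijection
from `P_k(ℝ^{n−1})` onto `H_k^+(ℝ^n)`, and `CK¹_{x_n}` restricts to a bijection from
`P_k(ℝ^{n−1})` onto `H_{k+1}^−(ℝ^n)` (the latter stated with target degree `k+1`, so that
over all `k` this is exactly the claim for `P_{k−1} → H_k^−`).  Both maps are linear by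
construction, so these are linear isomorphisms onto the indicated spaces. -/
theorem ck_isomorphisms {n : ℕ} (hn : 2 ≤ n) (μ : Fin n → ℝ) (hμ : ∀ i, 0 < μ i) (k : ℕ) :
    let e : Fin n := ⟨n - 1, by omega⟩
    -- homogeneous polynomials of degree `d` in the variables `x_1, …, x_{n−1}` only
    let P : ℕ → Submodule ℝ (MvPolynomial (Fin n) ℝ) := fun d =>
      homogeneousSubmodule (Fin n) ℝ d ⊓
        Subalgebra.toSubmodule (MvPolynomial.supported ℝ {i : Fin n | i ≠ e})
    -- degree-`d` Dunkl harmonics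
    let H : ℕ → Submodule ℝ (MvPolynomial (Fin n) ℝ) := fun d =>
      homogeneousSubmodule (Fin n) ℝ d ⊓ LinearMap.ker (lapD μ Finset.univ)
    -- even/odd parts in `x_n`
    let Hplus : Submodule ℝ (MvPolynomial (Fin n) ℝ) :=
      Submodule.map ((1 / 2 : ℝ) • (1 + reflOp e)) (H k)
    let Hminus : Submodule ℝ (MvPolynomial (Fin n) ℝ) :=
      Submodule.map ((1 / 2 : ℝ) • (1 - reflOp e)) (H (k + 1))
    -- `Δ_{[n−1]}`
    let D : Module.End ℝ (MvPolynomial (Fin n) ℝ) := lapD μ (Finset.univ.erase e)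
    let CK0 : Module.End ℝ (MvPolynomial (Fin n) ℝ) :=
      ∑ j ∈ Finset.range (k / 2 + 1),
        ((-1 : ℝ) ^ j / (2 ^ (2 * j) * (j.factorial : ℝ) *
            (ascPochhammer ℝ j).eval (μ e + 1 / 2))) •
          (LinearMap.mulLeft ℝ (X e ^ (2 * j)) * D ^ j)
    let CK1 : Module.End ℝ (MvPolynomial (Fin n) ℝ) :=
      ∑ j ∈ Finset.range (k / 2 + 1),
        ((-1 : ℝ) ^ j / (2 ^ (2 * j) * (j.factorial : ℝ) *
            (ascPochhammer ℝ j).eval (μ e + 3 / 2))) •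
          (LinearMap.mulLeft ℝ (X e ^ (2 * j + 1)) * D ^ j)
    Set.BijOn CK0 (P k : Set (MvPolynomial (Fin n) ℝ)) (Hplus : Set (MvPolynomial (Fin n) ℝ)) ∧
      Set.BijOn CK1 (P k : Set (MvPolynomial (Fin n) ℝ)) (Hminus : Set (MvPolynomial (Fin n) ℝ)) := by
  intro e P H Hplus Hminus D CK0 CK1
  have hν0 : (0:ℝ) < μ e + 1/2 := by have := hμ e; linarith
  have hν1 : (0:ℝ) < μ e + 3/2 := by have := hμ e; linarith
  have hcc0 : ∀ m : ℕ, CKdev.cc (μ e) (2*m+0+1) * CKdev.cc (μ e) (2*m+0+2)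
      = 4*((m:ℝ)+1)*((m:ℝ)+(μ e + 1/2)) := by
    intro m
    have h := CKdev.cc_prod (μe := μ e) (ε := 0) (by norm_num) m
    rw [h]; push_cast; ring
  have hcc1 : ∀ m : ℕ, CKdev.cc (μ e) (2*m+1+1) * CKdev.cc (μ e) (2*m+1+2)
      = 4*((m:ℝ)+1)*((m:ℝ)+(μ e + 3/2)) := by
    intro m
    have h := CKdev.cc_prod (μe := μ e) (ε := 1) (le_refl 1) m
    rw [h]; push_cast; ring
  have hCK0 : CK0 = CKdev.CKop e (lapD μ (Finset.univ.erase e))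
      (CKdev.Acoef (μ e + 1/2)) 0 (k/2) := by
    show (∑ j ∈ Finset.range (k / 2 + 1),
        ((-1 : ℝ) ^ j / (2 ^ (2 * j) * (j.factorial : ℝ) *
            (ascPochhammer ℝ j).eval (μ e + 1 / 2))) •
          (LinearMap.mulLeft ℝ (X e ^ (2 * j)) * (lapD μ (Finset.univ.erase e)) ^ j)) = _
    rw [CKdev.CKop]
    apply Finset.sum_congr rfl
    intro j _
    rw [CKdev.Acoef]
    norm_num
  have hCK1 : CK1 = CKdev.CKop e (lapD μ (Finset.univ.erase e))
      (CKdev.Acoef (μ e + 3/2)) 1 (k/2) := by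
    show (∑ j ∈ Finset.range (k / 2 + 1),
        ((-1 : ℝ) ^ j / (2 ^ (2 * j) * (j.factorial : ℝ) *
            (ascPochhammer ℝ j).eval (μ e + 3 / 2))) •
          (LinearMap.mulLeft ℝ (X e ^ (2 * j + 1)) * (lapD μ (Finset.univ.erase e)) ^ j)) = _
    rw [CKdev.CKop]
    apply Finset.sum_congr rfl
    intro j _
    rw [CKdev.Acoef]
  constructor
  · rw [hCK0]
    exact CKdev.CK_bijOn μ e 0 k (μ e + 1/2) (by norm_num) hν0 hcc0
      ((1 / 2 : ℝ) • (1 + reflOp e))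
      (fun y => by
        simp [LinearMap.smul_apply, LinearMap.add_apply, Module.End.one_apply])
  · rw [hCK1]
    exact CKdev.CK_bijOn μ e 1 k (μ e + 3/2) (le_refl 1) hν1 hcc1
      ((1 / 2 : ℝ) • (1 - reflOp e))
      (fun y => by
        simp [LinearMap.smul_apply, LinearMap.sub_apply, Module.End.one_apply, sub_eq_add_neg])
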